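/- If (X,d) is a complete CAT(0) space, then every closed and convex subset of X that is geodesically bounded is directionally bounded. -/

import Mathlib

open Set Filter Metric

section Defs

variable {X : Type*} [MetricSpace X]

/-- A unit-speed geodesic defined on `[a, b]`. -/
def IsGeodesicOn (γ : ℝ → X) (a b : ℝ) : Prop :=
  ∀ s ∈ Set.Icc a b, ∀ t ∈ Set.Icc a b, dist (γ s) (γ t) = |s - t|

/-- `S` is a geodesic segment joining `x` and `y`. -/
def IsGeodesicSegment (S : Set X) (x y : X) : Prop :=
  ∃ (a b : ℝ) (γ : ℝ → X), a ≤ b ∧ IsGeodesicOn γ a b ∧ γ a = x ∧ γ b = y ∧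
    S = γ '' Set.Icc a b

/-- A geodesic space: every two points are joined by a geodesic segment. -/
def GeodesicSpace (X : Type*) [MetricSpace X] : Prop :=
  ∀ x y : X, ∃ S : Set X, IsGeodesicSegment S x y

/-- A uniquely geodesic space. -/
def UniquelyGeodesic (X : Type*) [MetricSpace X] : Prop :=
  ∀ x y : X, ∃! S : Set X, IsGeodesicSegment S x y

/-- `S` is contained in the closed `M`-neighborhood of `T`. -/
def InClosedNbhd (S T : Set X) (M : ℝ) : Prop :=
  ∀ p ∈ S, ∃ q ∈ T, dist p q ≤ M

/-- A triangle with sides `S1, S2, S3` is `M`-slim. -/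
def SlimTriangle (S1 S2 S3 : Set X) (M : ℝ) : Prop :=
  InClosedNbhd S1 (S2 ∪ S3) M ∧ InClosedNbhd S2 (S1 ∪ S3) M ∧ InClosedNbhd S3 (S1 ∪ S2) M

/-- `X` is `δ`-hyperbolic: every geodesic triangle is `δ`-slim. -/
def DeltaHyperbolic (X : Type*) [MetricSpace X] (δ : ℝ) : Prop :=
  ∀ x y z : X, ∀ S1 S2 S3 : Set X,
    IsGeodesicSegment S1 x y → IsGeodesicSegment S2 y z → IsGeodesicSegment S3 z x →
    SlimTriangle S1 S2 S3 δ

/-- A geodesic ray `γ : [0, ∞) → X`. -/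
def IsGeodesicRay (γ : ℝ → X) : Prop :=
  ∀ s ∈ Set.Ici (0:ℝ), ∀ t ∈ Set.Ici (0:ℝ), dist (γ s) (γ t) = |s - t|

/-- A set is geodesically bounded if it contains no geodesic ray. -/
def GeodesicallyBounded (A : Set X) : Prop :=
  ¬ ∃ γ : ℝ → X, IsGeodesicRay γ ∧ ∀ t ∈ Set.Ici (0:ℝ), γ t ∈ A

/-- A directional curve `γ : [0, ∞) → X` (with some constant `b ≥ 0`). -/
def IsDirectionalCurve (γ : ℝ → X) : Prop :=
  ∃ b : ℝ, 0 ≤ b ∧ ∀ s ∈ Set.Ici (0:ℝ), ∀ t ∈ Set.Ici (0:ℝ),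
    |s - t| - b ≤ dist (γ s) (γ t) ∧ dist (γ s) (γ t) ≤ |s - t|

/-- A set is directionally bounded if it contains no directional curve. -/
def DirectionallyBounded (A : Set X) : Prop :=
  ¬ ∃ γ : ℝ → X, IsDirectionalCurve γ ∧ ∀ t ∈ Set.Ici (0:ℝ), γ t ∈ A

/-- A subset of a geodesic space is convex if every geodesic segment joining two of its
points is contained in it. -/
def GeodesicConvex (A : Set X) : Prop :=
  ∀ x ∈ A, ∀ y ∈ A, ∀ S : Set X, IsGeodesicSegment S x y → S ⊆ A

/-- The comparison point in the Euclidean plane: the point on the segment from `x'` to `y'`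
(of length `L`) at distance `t` from `x'`. -/
noncomputable def cmpPt (x' y' : EuclideanSpace ℝ (Fin 2)) (L t : ℝ) :
    EuclideanSpace ℝ (Fin 2) :=
  AffineMap.lineMap x' y' (t / L)

/-- `X` is a CAT(0) space: it is geodesic and for every geodesic triangle and every
comparison triangle in the Euclidean plane, distances between points on the triangle are
bounded by the distances between the corresponding comparison points. -/
def CAT0Space (X : Type*) [MetricSpace X] : Prop :=
  GeodesicSpace X ∧
  ∀ (x y z : X) (γ1 γ2 γ3 : ℝ → X),
    IsGeodesicOn γ1 0 (dist x y) → γ1 0 = x → γ1 (dist x y) = y →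
    IsGeodesicOn γ2 0 (dist y z) → γ2 0 = y → γ2 (dist y z) = z →
    IsGeodesicOn γ3 0 (dist z x) → γ3 0 = z → γ3 (dist z x) = x →
    ∀ x' y' z' : EuclideanSpace ℝ (Fin 2),
      dist x' y' = dist x y → dist y' z' = dist y z → dist z' x' = dist z x →
      (∀ s ∈ Set.Icc (0:ℝ) (dist x y), ∀ t ∈ Set.Icc (0:ℝ) (dist y z),
        dist (γ1 s) (γ2 t) ≤ dist (cmpPt x' y' (dist x y) s) (cmpPt y' z' (dist y z) t)) ∧
      (∀ s ∈ Set.Icc (0:ℝ) (dist y z), ∀ t ∈ Set.Icc (0:ℝ) (dist z x),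
        dist (γ2 s) (γ3 t) ≤ dist (cmpPt y' z' (dist y z) s) (cmpPt z' x' (dist z x) t)) ∧
      (∀ s ∈ Set.Icc (0:ℝ) (dist z x), ∀ t ∈ Set.Icc (0:ℝ) (dist x y),
        dist (γ3 s) (γ1 t) ≤ dist (cmpPt z' x' (dist z x) s) (cmpPt x' y' (dist x y) t))

/-- Busemann convexity. -/
def BusemannConvex (X : Type*) [MetricSpace X] : Prop :=
  GeodesicSpace X ∧
  ∀ (a b c d : ℝ) (γ σ : ℝ → X), a ≤ b → c ≤ d →
    IsGeodesicOn γ a b → IsGeodesicOn σ c d →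
    ∀ t ∈ Set.Icc (0:ℝ) 1,
      dist (γ ((1-t)*a + t*b)) (σ ((1-t)*c + t*d)) ≤
        (1-t) * dist (γ a) (σ c) + t * dist (γ b) (σ d)

/-- A `(lam, eps)`-quasi-geodesic defined on `[a, b]`. -/
def IsQuasiGeodesicOn (lam eps : ℝ) (γ : ℝ → X) (a b : ℝ) : Prop :=
  ∀ s ∈ Set.Icc a b, ∀ t ∈ Set.Icc a b,
    (1/lam) * |s - t| - eps ≤ dist (γ s) (γ t) ∧ dist (γ s) (γ t) ≤ lam * |s - t| + eps

/-- A `(lam, eps)`-quasi-geodesic ray. -/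
def IsQuasiGeodesicRay (lam eps : ℝ) (γ : ℝ → X) : Prop :=
  ∀ s ∈ Set.Ici (0:ℝ), ∀ t ∈ Set.Ici (0:ℝ),
    (1/lam) * |s - t| - eps ≤ dist (γ s) (γ t) ∧ dist (γ s) (γ t) ≤ lam * |s - t| + eps

/-- A `k`-local `lam`-quasi-geodesic ray: a `(lam, eps)`-quasi-geodesic ray locally,
for every `eps > 0`. -/
def IsLocalQuasiGeodesicRay (k lam : ℝ) (γ : ℝ → X) : Prop :=
  ∀ eps > (0:ℝ), ∀ s ∈ Set.Ici (0:ℝ), ∀ t ∈ Set.Ici (0:ℝ), |s - t| ≤ k →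
    (1/lam) * |s - t| - eps ≤ dist (γ s) (γ t) ∧ dist (γ s) (γ t) ≤ lam * |s - t| + eps

/-- `S` is the image of a `lam`-quasi-geodesic joining `x` and `y`
(i.e. a `(lam, eps)`-quasi-geodesic for every `eps > 0`). -/
def IsQuasiGeodesicSegment (lam : ℝ) (S : Set X) (x y : X) : Prop :=
  ∃ (a b : ℝ) (γ : ℝ → X), a ≤ b ∧ (∀ eps > (0:ℝ), IsQuasiGeodesicOn lam eps γ a b) ∧
    γ a = x ∧ γ b = y ∧ S = γ '' Set.Icc a b

/-- Every `lam`-quasi-geodesic triangle in `X` is `M`-slim. -/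
def QuasiGeodesicTrianglesSlim (X : Type*) [MetricSpace X] (lam M : ℝ) : Prop :=
  ∀ x y z : X, ∀ S1 S2 S3 : Set X,
    IsQuasiGeodesicSegment lam S1 x y → IsQuasiGeodesicSegment lam S2 y z →
    IsQuasiGeodesicSegment lam S3 z x → SlimTriangle S1 S2 S3 M

/-- A play of the Lion-Man game in `A` with speed `D`. -/
def IsLionManPlay (A : Set X) (D : ℝ) (L M : ℕ → X) : Prop :=
  (∀ n, L n ∈ A) ∧ (∀ n, M n ∈ A) ∧
  (∀ n, ∃ S : Set X, IsGeodesicSegment S (L n) (M n) ∧ L (n+1) ∈ S) ∧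
  (∀ n, dist (L n) (L (n+1)) = min D (dist (L n) (M n))) ∧
  (∀ n, dist (M n) (M (n+1)) ≤ D)

/-- The lion wins a play if `d(L_{n+1}, M_n) → 0`. -/
def LionWins (L M : ℕ → X) : Prop :=
  Filter.Tendsto (fun n => dist (L (n+1)) (M n)) Filter.atTop (nhds 0)

/-- The lion always wins the Lion-Man game played in `A`. -/
def LionAlwaysWins (A : Set X) : Prop :=
  ∀ D > (0:ℝ), ∀ L M : ℕ → X, IsLionManPlay A D L M → LionWins L M

end Defs


section Aux

noncomputable def pt (a b : ℝ) : EuclideanSpace ℝ (Fin 2) := WithLp.toLp 2 ![a,b]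

lemma pt_dist (a b c d : ℝ) : dist (pt a b) (pt c d) = Real.sqrt ((a-c)^2+(b-d)^2) := by
  rw [EuclideanSpace.dist_eq]
  simp [pt, Fin.sum_univ_two, Real.dist_eq, sq_abs]

lemma smul_pt (c a b : ℝ) : c • pt a b = pt (c*a) (c*b) := by
  ext i; fin_cases i <;> simp [pt]

lemma pt_zero : pt 0 0 = 0 := by ext i; fin_cases i <;> simp [pt]

lemma cmp_zero_left (y' : EuclideanSpace ℝ (Fin 2)) (L t : ℝ) : cmpPt 0 y' L t = (t/L) • y' := by
  simp [cmpPt, AffineMap.lineMap_apply]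

lemma cmp_zero_right (z' : EuclideanSpace ℝ (Fin 2)) (L t : ℝ) : cmpPt z' 0 L t = (1 - t/L) • z' := by
  simp [cmpPt, AffineMap.lineMap_apply]; module

lemma euclid_cmp (P Q R : ℝ) (hP : 0 < P) (hR : 0 < R)
    (h1 : P ≤ Q + R) (h2 : Q ≤ P + R) (h3 : R ≤ P + Q) :
    ∃ x' y' z' : EuclideanSpace ℝ (Fin 2),
      dist x' y' = P ∧ dist y' z' = Q ∧ dist z' x' = R ∧
      ∀ t : ℝ, (dist (cmpPt z' x' R (R - t)) (cmpPt x' y' P t))^2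
        = t^2 * ((Q^2 - (R-P)^2)/(P*R)) := by
  have hQ : 0 ≤ Q := by
    rcases le_total R P with h | h
    · linarith
    · linarith
  set a : ℝ := (P^2+R^2-Q^2)/(2*P) with ha
  have hnn : 0 ≤ R^2 - a^2 := by
    have key : (2*P)^2 * (R^2 - a^2) = (Q^2 - (R-P)^2) * ((R+P)^2 - Q^2) := by
      rw [ha]; field_simp; ring
    have f1 : 0 ≤ Q^2 - (R-P)^2 := by nlinarith
    have f2 : 0 ≤ (R+P)^2 - Q^2 := by nlinarith
    have f3 : 0 ≤ (2*P)^2 * (R^2 - a^2) := key ▸ mul_nonneg f1 f2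
    have f4 : (0:ℝ) < (2*P)^2 := by positivity
    exact nonneg_of_mul_nonneg_right f3 f4
  set h : ℝ := Real.sqrt (R^2 - a^2) with hh
  have hsq : h^2 = R^2 - a^2 := Real.sq_sqrt hnn
  refine ⟨pt 0 0, pt P 0, pt a h, ?_, ?_, ?_, ?_⟩
  · rw [pt_dist]; rw [show (0-P)^2 + ((0:ℝ)-0)^2 = P^2 by ring, Real.sqrt_sq hP.le]
  · rw [pt_dist]
    rw [show (P-a)^2 + (0-h)^2 = P^2 - 2*P*a + a^2 + h^2 by ring]
    rw [hsq, show P^2 - 2*P*a + a^2 + (R^2 - a^2) = Q^2 by rw [ha]; field_simp; ring,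
      Real.sqrt_sq hQ]
  · rw [pt_dist]
    rw [show (a-0)^2 + (h-0)^2 = a^2 + h^2 by ring, hsq,
      show a^2 + (R^2-a^2) = R^2 by ring, Real.sqrt_sq hR.le]
  · intro t
    rw [pt_zero, cmp_zero_left, cmp_zero_right, smul_pt, smul_pt, pt_dist]
    rw [Real.sq_sqrt (by positivity)]
    have e1 : (1 - (R-t)/R) = t/R := by field_simp; ring
    rw [e1]
    have : (t/R*a - t/P*P)^2 + (t/R*h - t/P*0)^2 = (t/R)^2*((a-R)^2 + h^2) := by
      field_simp; ring
    rw [this, hsq, show (a-R)^2 + (R^2 - a^2) = 2*R*(R-a) by ring]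
    have : R - a = (Q^2 - (R-P)^2)/(2*P) := by rw [ha]; field_simp; ring
    rw [this]; field_simp

variable {X : Type*} [MetricSpace X]

lemma exists_unit_geodesic (hX : GeodesicSpace X) {A : Set X} (hconv : GeodesicConvex A)
    {x y : X} (hx : x ∈ A) (hy : y ∈ A) :
    ∃ σ : ℝ → X, IsGeodesicOn σ 0 (dist x y) ∧ σ 0 = x ∧ σ (dist x y) = y ∧
      ∀ t ∈ Set.Icc 0 (dist x y), σ t ∈ A := by
  obtain ⟨S, a, c, γ, hac, hg, hga, hgc, hSeq⟩ := hX x y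
  have hd : dist x y = c - a := by
    rw [← hga, ← hgc, hg a ⟨le_refl a, hac⟩ c ⟨hac, le_refl c⟩,
      abs_of_nonpos (by linarith)]
    ring
  refine ⟨fun t => γ (a + t), ?_, by simpa using hga, ?_, ?_⟩
  · intro s hs t ht
    rw [hd] at hs ht
    rw [hg (a+s) ⟨by linarith [hs.1], by linarith [hs.2]⟩ (a+t)
      ⟨by linarith [ht.1], by linarith [ht.2]⟩]
    congr 1; ring
  · show γ (a + (dist x y)) = y
    rw [hd, show a + (c - a) = c by ring, hgc]
  · intro t ht
    rw [hd] at ht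
    have hm : γ (a+t) ∈ S := by
      rw [hSeq]; exact ⟨a+t, ⟨by linarith [ht.1], by linarith [ht.2]⟩, rfl⟩
    exact hconv x hx y hy S ⟨a, c, γ, hac, hg, hga, hgc, hSeq⟩ hm

lemma exists_unit_geodesic' (hX : GeodesicSpace X) (x y : X) :
    ∃ σ : ℝ → X, IsGeodesicOn σ 0 (dist x y) ∧ σ 0 = x ∧ σ (dist x y) = y := by
  obtain ⟨σ, h1, h2, h3, _⟩ := exists_unit_geodesic hX
    (A := Set.univ) (fun _ _ _ _ S _ _ _ => trivial) (Set.mem_univ x) (Set.mem_univ y)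
  exact ⟨σ, h1, h2, h3⟩

lemma cat0_comparison (hX : CAT0Space X) (p x y : X) (σ₁ σ₂ : ℝ → X)
    (h1 : IsGeodesicOn σ₁ 0 (dist p x)) (h10 : σ₁ 0 = p) (h11 : σ₁ (dist p x) = x)
    (h2 : IsGeodesicOn σ₂ 0 (dist p y)) (h20 : σ₂ 0 = p) (h21 : σ₂ (dist p y) = y)
    (hP : 0 < dist p x) (hR : 0 < dist p y) {t : ℝ}
    (ht : t ∈ Set.Icc 0 (dist p x)) (ht' : t ∈ Set.Icc 0 (dist p y)) :
    (dist (σ₁ t) (σ₂ t))^2 ≤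
      t^2 * (((dist x y)^2 - (dist p y - dist p x)^2)/(dist p x * dist p y)) := by
  set P := dist p x with hPdef
  set Q := dist x y with hQdef
  set R := dist p y with hRdef
  obtain ⟨γ2, hg2, hg20, hg21⟩ := exists_unit_geodesic' hX.1 x y
  have hyp : dist y p = R := dist_comm y p
  have hγ3 : IsGeodesicOn (fun s => σ₂ (R - s)) 0 (dist y p) := by
    rw [hyp]
    intro s hs u hu
    rw [h2 (R-s) ⟨by linarith [hs.2], by linarith [hs.1]⟩ (R-u)
      ⟨by linarith [hu.2], by linarith [hu.1]⟩]
    rw [show R - s - (R - u) = -(s - u) by ring, abs_neg]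
  obtain ⟨x', y', z', hd1, hd2, hd3, hkey⟩ := euclid_cmp P Q R hP hR
    (by have h := dist_triangle p y x; rw [dist_comm y x] at h
        rw [hPdef, hQdef, hRdef]; linarith)
    (by have h := dist_triangle x p y; rw [dist_comm x p] at h
        rw [hPdef, hQdef, hRdef]; linarith)
    (by rw [hPdef, hQdef, hRdef]; exact dist_triangle p x y)
  have hcat := (hX.2 p x y σ₁ γ2 (fun s => σ₂ (R - s)) h1 h10 h11 hg2 hg20 hg21
    hγ3 (by simp [h21]) (by rw [hyp]; simpa using h20)
    x' y' z' hd1 hd2 (hd3.trans hyp.symm)).2.2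
  have happ := hcat (R - t) (by rw [hyp]; constructor <;> [linarith [ht'.2]; linarith [ht'.1]])
    t ht
  rw [hyp] at happ
  simp only [show R - (R - t) = t by ring] at happ
  rw [dist_comm (σ₁ t) (σ₂ t)]
  calc (dist (σ₂ t) (σ₁ t))^2 ≤ (dist (cmpPt z' x' R (R - t)) (cmpPt x' y' P t))^2 := by
        apply pow_le_pow_left₀ dist_nonneg happ
    _ = t^2 * ((Q^2 - (R-P)^2)/(P*R)) := hkey t

end Aux

theorem stmt1 {X : Type*} [MetricSpace X] [CompleteSpace X] (hX : CAT0Space X)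
    (A : Set X) (hclosed : IsClosed A) (hconv : GeodesicConvex A)
    (hgb : GeodesicallyBounded A) : DirectionallyBounded A := by
  rintro ⟨γ, ⟨b, hb0, hdir⟩, hmem⟩
  apply hgb
  set p := γ 0 with hp
  have hpA : p ∈ A := hmem 0 Set.self_mem_Ici
  have hchoice : ∀ n : ℕ, ∃ σ : ℝ → X, IsGeodesicOn σ 0 (dist p (γ n)) ∧ σ 0 = p ∧
      σ (dist p (γ n)) = γ n ∧ ∀ t ∈ Set.Icc 0 (dist p (γ n)), σ t ∈ A :=
    fun n => exists_unit_geodesic hX.1 hconv hpA (hmem n (Set.mem_Ici.mpr (Nat.cast_nonneg n)))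
  choose σ hσg hσ0 hσe hσA using hchoice
  have habs : ∀ n : ℕ, |(0:ℝ) - n| = (n:ℝ) := by
    intro n; rw [zero_sub, abs_neg, abs_of_nonneg (Nat.cast_nonneg n)]
  have hDle : ∀ n : ℕ, dist p (γ n) ≤ (n:ℝ) := by
    intro n
    have := (hdir 0 Set.self_mem_Ici n (Set.mem_Ici.mpr (Nat.cast_nonneg n))).2
    rwa [habs n] at this
  have hDge : ∀ n : ℕ, (n:ℝ) - b ≤ dist p (γ n) := by
    intro n
    have := (hdir 0 Set.self_mem_Ici n (Set.mem_Ici.mpr (Nat.cast_nonneg n))).1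
    rwa [habs n] at this
  set C : ℝ := 2*b + b^2 with hC
  have hC0 : 0 ≤ C := by positivity
  -- Key Cauchy estimate
  have key : ∀ t : ℝ, 0 ≤ t → ∀ m n : ℕ, m ≤ n → b + 1 ≤ (m:ℝ) → t ≤ (m:ℝ) - b →
      dist (σ m t) (σ n t) ^ 2 ≤ t^2 * (C / ((m:ℝ) - b)) := by
    intro t ht0 m n hmn hm ht
    set P := dist p (γ m) with hPdef
    set R := dist p (γ n) with hRdef
    set Q := dist (γ m) (γ n) with hQdef
    have hmb : (1:ℝ) ≤ (m:ℝ) - b := by linarith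
    have hnm : (m:ℝ) ≤ (n:ℝ) := Nat.cast_le.mpr hmn
    have hP1 : (m:ℝ) - b ≤ P := hDge m
    have hR1 : (m:ℝ) - b ≤ R := le_trans (by linarith [hDge n]) (le_refl R)
    have hPpos : 0 < P := by linarith
    have hRpos : 0 < R := by linarith
    have hQle : Q ≤ (n:ℝ) - (m:ℝ) := by
      have := (hdir m (Set.mem_Ici.mpr (Nat.cast_nonneg m)) n (Set.mem_Ici.mpr (Nat.cast_nonneg n))).2
      rwa [abs_of_nonpos (by linarith), neg_sub] at this
    have hQRP : Q ≤ R - P + b := by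
      have := hDge n
      have := hDle m
      linarith
    have hcmp := cat0_comparison hX p (γ m) (γ n) (σ m) (σ n)
      (hσg m) (hσ0 m) (hσe m) (hσg n) (hσ0 n) (hσe n) hPpos hRpos
      (t := t) ⟨ht0, by linarith⟩ ⟨ht0, by linarith⟩
    refine le_trans hcmp ?_
    apply mul_le_mul_of_nonneg_left _ (by positivity)
    rw [div_le_div_iff₀ (by positivity) (by linarith)]
    have hQ0 : (0:ℝ) ≤ Q := dist_nonneg
    have hPm : P ≤ (m:ℝ) := hDle m
    have hRge1 : (1:ℝ) ≤ R := by linarith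
    have hmbPR : (m:ℝ) - b ≤ P * R := le_trans hP1 (le_mul_of_one_le_right hPpos.le hRge1)
    have f1 : Q^2 ≤ (R - P + b)^2 := sq_le_sq' (by linarith) hQRP
    have f2 : (R - P) * ((m:ℝ) - b) ≤ R * P :=
      mul_le_mul (by linarith) (by linarith) (by linarith) hRpos.le
    have g1 := mul_le_mul_of_nonneg_right f1 (show (0:ℝ) ≤ (m:ℝ) - b by linarith)
    have g2 := mul_le_mul_of_nonneg_left f2 (show (0:ℝ) ≤ 2*b by linarith)
    have g3 := mul_le_mul_of_nonneg_left hmbPR (sq_nonneg b)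
    nlinarith [g1, g2, g3]
  -- Cauchy sequences
  have hcauchy : ∀ t : ℝ, 0 ≤ t → CauchySeq (fun n => σ n t) := by
    intro t ht0
    rw [Metric.cauchySeq_iff]
    intro ε hε
    obtain ⟨N, hN⟩ := exists_nat_gt (b + 1 + t + t^2 * C / ε^2)
    refine ⟨N, fun m hm n hn => ?_⟩
    -- wlog via min
    have main : ∀ m n : ℕ, N ≤ m → N ≤ n → m ≤ n → dist (σ m t) (σ n t) < ε := by
      intro m n hm hn hmn
      have hmR : (N:ℝ) ≤ (m:ℝ) := Nat.cast_le.mpr hm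
      have h0 : (0:ℝ) ≤ t^2 * C / ε^2 := by positivity
      have hb1 : b + 1 ≤ (m:ℝ) := by linarith
      have htm : t ≤ (m:ℝ) - b := by
        have : t^2 * C / ε^2 ≥ 0 := by positivity
        linarith
      have h1 := key t ht0 m n hmn hb1 htm
      have h2 : t^2 * (C / ((m:ℝ) - b)) < ε^2 := by
        rw [mul_div_assoc']
        rw [div_lt_iff₀ (by linarith)]
        have hε2 : (0:ℝ) < ε^2 := by positivity
        have : t^2 * C / ε^2 < (m:ℝ) - b := by
          have : t^2 * C / ε^2 ≥ 0 := by positivity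
          linarith
        calc t^2 * C = (t^2 * C / ε^2) * ε^2 := by field_simp
          _ < ((m:ℝ) - b) * ε^2 := by
              apply mul_lt_mul_of_pos_right this hε2
          _ = ε^2 * ((m:ℝ) - b) := by ring
      exact lt_of_pow_lt_pow_left₀ 2 hε.le (lt_of_le_of_lt h1 h2)
    rcases le_total m n with h | h
    · exact main m n hm hn h
    · rw [dist_comm]; exact main n m hn hm h
  have hex : ∀ t : ℝ, ∃ x : X, 0 ≤ t → Filter.Tendsto (fun n => σ n t) Filter.atTop (nhds x) := by
    intro t
    by_cases h : 0 ≤ t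
    · obtain ⟨x, hx⟩ := cauchySeq_tendsto_of_complete (hcauchy t h)
      exact ⟨x, fun _ => hx⟩
    · exact ⟨p, fun h' => absurd h' h⟩
  choose r hr using hex
  -- eventually t ∈ [0, dist p (γ n)]
  have hev : ∀ t : ℝ, 0 ≤ t → ∀ᶠ n : ℕ in Filter.atTop, t ∈ Set.Icc 0 (dist p (γ n)) := by
    intro t ht0
    obtain ⟨N, hN⟩ := exists_nat_gt (t + b)
    filter_upwards [Filter.eventually_ge_atTop N] with n hn
    have : (N:ℝ) ≤ (n:ℝ) := Nat.cast_le.mpr hn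
    exact ⟨ht0, by linarith [hDge n]⟩
  refine ⟨r, ?_, ?_⟩
  · intro s hs t ht
    simp only [Set.mem_Ici] at hs ht
    have hdist : Filter.Tendsto (fun n => dist (σ n s) (σ n t)) Filter.atTop
        (nhds (dist (r s) (r t))) := (hr s hs).dist (hr t ht)
    have hconst : Filter.Tendsto (fun n => dist (σ n s) (σ n t)) Filter.atTop (nhds |s - t|) := by
      apply Filter.Tendsto.congr' _ tendsto_const_nhds
      filter_upwards [hev s hs, hev t ht] with n hns hnt
      exact ((hσg n) s hns t hnt).symm
    exact tendsto_nhds_unique hdist hconst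
  · intro t ht
    simp only [Set.mem_Ici] at ht
    apply hclosed.mem_of_tendsto (hr t ht)
    filter_upwards [hev t ht] with n hn
    exact hσA n t hn
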